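/- Let n and C be integers with 1 ≤ n ≤ C, and let K' := { g ∈ GL₂(F) : g₁₁ ∈ 1 + pⁿ, g₁₂ ∈ p^C, g₂₁ ∈ ϖ^{n−C}·o, g₂₂ ∈ o^× }. Assume either L/F is unramified, or L/F is ramified and v(a) = 1. Let R ⊆ o be a set of representatives for o/p^C and R' ⊆ p a set of representatives for p/p^{C+v(a)}. Then the q^C + q^{C+v(a)−1} elements t(1, y) for y ∈ R together with t(x, 1) for x ∈ R' form a complete irredundant set of representatives for the cosets of T(F) ∩ Z(F)·K' in T(F): every element of T(F) lies in t·(T(F) ∩ Z(F)·K') for exactly one t in this family. -/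

import Mathlib

open scoped Pointwise
open Matrix

noncomputable section

abbrev Zm0 : Type := WithZero (Multiplicative ℤ)

/-- `ev n` is the value (in `ℤₘ₀ = WithZero (Multiplicative ℤ)`) of an element of additive
valuation `n`; thus `x ∈ 𝔭^n` iff `v x ≤ ev n`, `x ∈ 𝔬` iff `v x ≤ ev 0`, and `x ∈ 𝔬^×` iff
`v x = ev 0`. -/
def ev (n : ℤ) : Zm0 := ((Multiplicative.ofAdd (-n) : Multiplicative ℤ) : Zm0)

variable {F : Type*} [Field F]

/-- the matrix t(x,y) = [[x, cy],[−ay, x−by]] -/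
def tmat (a b c x y : F) : Matrix (Fin 2) (Fin 2) F :=
  !![x, c * y; -(a * y), x - b * y]

/-- the torus T(F) ⊆ GL₂(F), as a set of matrices -/
def TSet (a b c : F) : Set (Matrix (Fin 2) (Fin 2) F) :=
  {m | ∃ x y : F, x ^ 2 - b * x * y + a * c * y ^ 2 ≠ 0 ∧ m = tmat a b c x y}

/-- Z(F): the invertible scalar matrices -/
def ZF (F : Type*) [Field F] : Set (Matrix (Fin 2) (Fin 2) F) :=
  {m | ∃ z : F, z ≠ 0 ∧ m = z • (1 : Matrix (Fin 2) (Fin 2) F)}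

/-- the compact subgroup
K' = { g : g₁₁ ∈ 1 + 𝔭ⁿ, g₁₂ ∈ 𝔭^C, g₂₁ ∈ ϖ^{n−C}·𝔬, g₂₂ ∈ 𝔬^× } -/
def Kp (v : Valuation F Zm0) (n C : ℕ) : Set (Matrix (Fin 2) (Fin 2) F) :=
  {g | v (g 0 0 - 1) ≤ ev n ∧ v (g 0 1) ≤ ev C ∧
       v (g 1 0) ≤ ev ((n : ℤ) - C) ∧ v (g 1 1) = ev 0}

section AuxLemmas

lemma ev_le_ev {k l : ℤ} : ev k ≤ ev l ↔ l ≤ k := by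
  rw [ev, ev, WithZero.coe_le_coe, Multiplicative.ofAdd_le]; omega

lemma ev_lt_ev {k l : ℤ} : ev k < ev l ↔ l < k := by
  rw [ev, ev, WithZero.coe_lt_coe, Multiplicative.ofAdd_lt]; omega

lemma ev_ne_zero (k : ℤ) : ev k ≠ 0 := WithZero.coe_ne_zero

lemma ev_inj {k l : ℤ} (h : ev k = ev l) : k = l := by
  have h1 : ev k ≤ ev l := le_of_eq h
  have h2 : ev l ≤ ev k := le_of_eq h.symm
  rw [ev_le_ev] at h1 h2; omega

lemma ev_zero : ev 0 = 1 := by simp [ev]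

lemma ev_mul (k l : ℤ) : ev (k + l) = ev k * ev l := by
  rw [ev, ev, ev, ← WithZero.coe_mul, ← ofAdd_add]; ring_nf

lemma ev_pow (m : ℤ) (e : ℕ) : ev m ^ e = ev (e * m) := by
  rw [ev, ← WithZero.coe_pow, ← ofAdd_nsmul, ev]
  norm_num

lemma zm0_exists_ev {u : Zm0} (hu : u ≠ 0) : ∃ k : ℤ, u = ev k := by
  obtain ⟨m, rfl⟩ := WithZero.ne_zero_iff_exists.mp hu
  exact ⟨-m.toAdd, by rw [ev, neg_neg, ofAdd_toAdd]⟩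

lemma zm0_le_ev_of_lt_ev {u : Zm0} {k : ℤ} (h : u < ev k) : u ≤ ev (k + 1) := by
  rcases eq_or_ne u 0 with rfl | hu
  · exact zero_le'
  · obtain ⟨m, rfl⟩ := WithZero.ne_zero_iff_exists.mp hu
    rw [ev, WithZero.coe_lt_coe, ← Multiplicative.toAdd_lt] at h
    rw [ev, WithZero.coe_le_coe, ← Multiplicative.toAdd_le]
    simp only [toAdd_ofAdd] at h ⊢
    omega

lemma zm0_pow_eq_one {u : Zm0} {e : ℕ} (he : 0 < e) (h : u ^ e = 1) : u = 1 := by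
  rcases eq_or_ne u 0 with rfl | hu
  · rw [zero_pow he.ne'] at h; exact absurd h (by simp)
  · obtain ⟨m, rfl⟩ := WithZero.ne_zero_iff_exists.mp hu
    rw [← WithZero.coe_pow, ← WithZero.coe_one, WithZero.coe_inj] at h
    have h2 : (m ^ e).toAdd = (1 : Multiplicative ℤ).toAdd := by rw [h]
    rw [toAdd_pow, toAdd_one] at h2
    have h2' : (e : ℤ) * m.toAdd = 0 := by simpa [nsmul_eq_mul] using h2
    have hm : m.toAdd = 0 := by
      rcases mul_eq_zero.mp h2' with h3 | h3
      · exact absurd (by exact_mod_cast h3) he.ne'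
      · exact h3
    rw [← WithZero.coe_one, WithZero.coe_inj]
    have h4 : m = Multiplicative.ofAdd 0 := by rw [← hm, ofAdd_toAdd]
    simpa using h4

lemma zm0_mul_lt_of_lt_one {cc aa : Zm0} (hc : cc < 1) (ha : aa ≠ 0) : cc * aa < aa := by
  rw [mul_comm]
  conv_rhs => rw [← mul_one aa]
  exact mul_lt_mul_of_pos_left hc (zero_lt_iff.mpr ha)

lemma zm0_le_of_mul_le_mul {aa u w : Zm0} (ha : aa ≠ 0) (h : aa * u ≤ aa * w) : u ≤ w := by
  have h2 := mul_le_mul_right h aa⁻¹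
  rwa [← mul_assoc, ← mul_assoc, inv_mul_cancel₀ ha, one_mul, one_mul] at h2

lemma zm0_mul_inv_lt_one {aa bb : Zm0} (h : aa < bb) (hb : bb ≠ 0) : aa * bb⁻¹ < 1 := by
  have h2 := mul_lt_mul_of_pos_left h (zero_lt_iff.mpr (inv_ne_zero hb))
  rw [inv_mul_cancel₀ hb] at h2
  rwa [mul_comm]

lemma tmat00 (a b c x y : F) : tmat a b c x y 0 0 = x := by simp [tmat]
lemma tmat01 (a b c x y : F) : tmat a b c x y 0 1 = c * y := by simp [tmat]
lemma tmat10 (a b c x y : F) : tmat a b c x y 1 0 = -(a * y) := by simp [tmat]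
lemma tmat11 (a b c x y : F) : tmat a b c x y 1 1 = x - b * y := by simp [tmat]

lemma tmat_mul (a b c x1 y1 x2 y2 : F) :
    tmat a b c x1 y1 * tmat a b c x2 y2 =
      tmat a b c (x1 * x2 - a * c * y1 * y2) (x1 * y2 + x2 * y1 - b * y1 * y2) := by
  ext i j
  fin_cases i <;> fin_cases j <;>
    simp [tmat, Matrix.mul_apply, Fin.sum_univ_two] <;> ring

lemma smul_tmat (a b c z x y : F) : z • tmat a b c x y = tmat a b c (z * x) (z * y) := by
  ext i j
  fin_cases i <;> fin_cases j <;> simp [tmat] <;> ring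

lemma smul_one_mul_entry (z : F) (k : Matrix (Fin 2) (Fin 2) F) (i j : Fin 2) :
    ((z • (1 : Matrix (Fin 2) (Fin 2) F)) * k) i j = z * k i j := by
  rw [smul_mul_assoc, one_mul, Matrix.smul_apply, smul_eq_mul]

end AuxLemmas

set_option maxHeartbeats 2000000 in
/-- if L/F is unramified, or ramified with v(a) = 1, then the elements
t(1,y), y ∈ R (R a set of representatives of 𝔬/𝔭^C) together with t(x,1), x ∈ R'
(R' ⊆ 𝔭 a set of representatives of 𝔭/𝔭^{C+v(a)}) form a complete irredundant set of coset
representatives for T(F) ∩ Z(F)·K' in T(F). -/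
theorem stmt15
    {L : Type*} [Field L] [CharZero F] [Algebra F L]
    (v : Valuation F Zm0) (vL : Valuation L Zm0)
    (ϖ : F) (hϖ : v ϖ = ev 1)
    (ϖL : L) (hϖL : vL ϖL = ev 1)
    (a b c : F)
    (hao : v a ≤ ev 0) (hbo : v b ≤ ev 0) (hc : v c = ev 0)
    (hd0 : b ^ 2 - 4 * (a * c) ≠ 0)
    (hnonsq : ∀ r : F, r ^ 2 ≠ b ^ 2 - 4 * (a * c))
    (sqd : L) (hsqd : sqd ^ 2 = algebraMap F L (b ^ 2 - 4 * (a * c)))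
    (hspan : ∀ z : L, ∃ s t : F, z = algebraMap F L s + algebraMap F L t * sqd)
    (β : L) (hβ : β = (algebraMap F L b + sqd) / (2 * algebraMap F L c))
    -- {1, β} is an 𝔬-basis of 𝔬_L :
    (hbasis : ∀ z : L, vL z ≤ ev 0 ↔
      ∃ s t : F, v s ≤ ev 0 ∧ v t ≤ ev 0 ∧ z = algebraMap F L s + algebraMap F L t * β)
    -- v_L restricted to F is e·v for the ramification index e ≥ 1 :
    (hcomp : ∃ e : ℕ, 0 < e ∧ ∀ x : F, vL (algebraMap F L x) = (v x) ^ e)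
    (n C : ℕ) (hn : 1 ≤ n) (hnC : n ≤ C)
    -- v(a) = va, as an integer :
    (va : ℤ) (hva : v a = ev va)
    -- either L/F is unramified, or L/F is ramified and v(a) = 1 :
    (hcase : vL (algebraMap F L ϖ) = ev 1 ∨ (vL (algebraMap F L ϖ) = ev 2 ∧ va = 1))
    -- R ⊆ 𝔬 is a set of representatives for 𝔬/𝔭^C :
    (R : Finset F) (hR : ∀ r ∈ R, v r ≤ ev 0)
    (hRrep : ∀ x : F, v x ≤ ev 0 → ∃! r, r ∈ R ∧ v (x - r) ≤ ev C)
    -- R' ⊆ 𝔭 is a set of representatives for 𝔭/𝔭^{C+v(a)} :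
    (R' : Finset F) (hR' : ∀ r ∈ R', v r ≤ ev 1)
    (hR'rep : ∀ x : F, v x ≤ ev 1 → ∃! r, r ∈ R' ∧ v (x - r) ≤ ev ((C : ℤ) + va)) :
    ∀ g ∈ TSet a b c, ∃! m : Matrix (Fin 2) (Fin 2) F,
      ((∃ y ∈ R, m = tmat a b c 1 y) ∨ (∃ x ∈ R', m = tmat a b c x 1))
      ∧ ∃ u ∈ TSet a b c ∩ (ZF F * Kp v n C), g = m * u := by
  intro g hg
  obtain ⟨x₀, y₀, hN₀, rfl⟩ := hg
  obtain ⟨e, he, hve⟩ := hcomp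
  have hc1 : v c = 1 := by rw [hc, ev_zero]
  have hcne : c ≠ 0 := by
    intro h
    rw [h, v.map_zero] at hc1
    exact zero_ne_one hc1
  have hao1 : v a ≤ 1 := by rw [← ev_zero]; exact hao
  have hbo1 : v b ≤ 1 := by rw [← ev_zero]; exact hbo
  have hev1lt : ev 1 < 1 := by rw [← ev_zero]; exact ev_lt_ev.mpr one_pos
  have hev2lt : ev 2 < ev 1 := ev_lt_ev.mpr one_lt_two
  have hevClt : ev (C:ℤ) < 1 := lt_of_le_of_lt (ev_le_ev.mpr (by omega)) hev1lt
  have hevC1 : ev (C:ℤ) ≤ 1 := le_of_lt hevClt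
  have hϖne : ϖ ≠ 0 := by
    intro h
    rw [h, v.map_zero] at hϖ
    exact (ev_ne_zero 1) hϖ.symm
  have hAinj : Function.Injective (algebraMap F L) := (algebraMap F L).injective
  have h2L : (2 : L) ≠ 0 := by
    intro h
    have h2 : algebraMap F L 2 = algebraMap F L 0 := by rw [map_zero, map_ofNat]; exact h
    exact two_ne_zero (hAinj h2)
  have hcL : algebraMap F L c ≠ 0 := fun h => hcne (hAinj (by rw [h, map_zero]))
  have h2cL : 2 * algebraMap F L c ≠ 0 := mul_ne_zero h2L hcL
  have hβeq : sqd = 2 * algebraMap F L c * β - algebraMap F L b := by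
    rw [hβ]; field_simp; ring
  have hββ : algebraMap F L c * β ^ 2 = algebraMap F L b * β - algebraMap F L a := by
    have h4c : (4 : L) * algebraMap F L c ≠ 0 := by
      apply mul_ne_zero _ hcL
      intro h
      have h2 : algebraMap F L 4 = algebraMap F L 0 := by rw [map_zero, map_ofNat]; exact h
      exact (by norm_num : (4:F) ≠ 0) (hAinj h2)
    have hkey : (2 * algebraMap F L c * β - algebraMap F L b)^2
        = (algebraMap F L b)^2 - 4 * (algebraMap F L a * algebraMap F L c) := by
      rw [← hβeq, hsqd]
      simp only [map_sub, _root_.map_mul, map_pow, map_ofNat]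
    have h0 : 4 * algebraMap F L c *
        (algebraMap F L c * β^2 - (algebraMap F L b * β - algebraMap F L a)) = 0 := by
      linear_combination hkey
    rcases mul_eq_zero.mp h0 with h1 | h1
    · exact absurd h1 h4c
    · linear_combination h1
  have hβF : ∀ r : F, β ≠ algebraMap F L r := by
    intro r hr
    apply hnonsq (2*c*r - b)
    apply hAinj
    have h1 : sqd = algebraMap F L (2*c*r - b) := by
      rw [hβeq, hr]
      simp only [map_sub, _root_.map_mul, map_ofNat]
    rw [map_pow, ← h1, hsqd]
  have hcoords : ∀ s t s' t' : F,
      algebraMap F L s + algebraMap F L t * β = algebraMap F L s' + algebraMap F L t' * β →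
      s = s' ∧ t = t' := by
    intro s t s' t' h
    by_cases ht : t = t'
    · subst ht
      refine ⟨hAinj (add_right_cancel h), rfl⟩
    · exfalso
      apply hβF ((s - s') / (t' - t))
      have htt : algebraMap F L t' - algebraMap F L t ≠ 0 := by
        rw [← map_sub]
        exact fun hh => ht (sub_eq_zero.mp (hAinj (by rw [hh, map_zero]))).symm
      rw [map_div₀, map_sub, map_sub, eq_div_iff htt]
      linear_combination -h
  have hnormid : ∀ x y : F,
      (algebraMap F L x - algebraMap F L c * algebraMap F L y * β) *
        (algebraMap F L x - algebraMap F L b * algebraMap F L y +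
          algebraMap F L c * algebraMap F L y * β) =
      algebraMap F L (x ^ 2 - b * x * y + a * c * y ^ 2) := by
    intro x y
    simp only [map_add, map_sub, _root_.map_mul, map_pow]
    linear_combination (-(algebraMap F L c) * (algebraMap F L y)^2) * hββ
  have hϖLne : algebraMap F L ϖ ≠ 0 := fun h => hϖne (hAinj (by rw [h, map_zero]))
  have hUU : (∀ y : F, v y ≤ 1 → v (1 - b * y + a * c * y ^ 2) = 1) ∧
      (∀ x : F, v x ≤ ev 1 → v (x ^ 2 - b * x + a * c) = ev va) := by
    rcases hcase with hur | ⟨hram, hva1⟩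
    · -- unramified
      have he1 : e = 1 := by
        have h1 := hve ϖ
        rw [hϖ, hur, ev_pow] at h1
        have := ev_inj h1
        omega
      have hvL : ∀ x : F, vL (algebraMap F L x) = v x := by
        intro x; rw [hve x, he1, pow_one]
      have hunit : ∀ s t : F, v s ≤ 1 → v t ≤ 1 → (v s = 1 ∨ v t = 1) →
          vL (algebraMap F L s + algebraMap F L t * β) = 1 := by
        intro s t hs ht hst
        have hzne : algebraMap F L s + algebraMap F L t * β ≠ 0 := by
          intro h0
          by_cases ht0 : t = 0
          · rw [ht0, map_zero, zero_mul, add_zero] at h0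
            have hs0 : s = 0 := hAinj (by rw [h0, map_zero])
            rcases hst with h1 | h1
            · rw [hs0, v.map_zero] at h1; simp at h1
            · rw [ht0, v.map_zero] at h1; simp at h1
          · apply hβF (-s / t)
            have htL : algebraMap F L t ≠ 0 := fun hh => ht0 (hAinj (by rw [hh, map_zero]))
            rw [map_div₀, map_neg, eq_div_iff htL]
            linear_combination h0
        have hz1 : vL (algebraMap F L s + algebraMap F L t * β) ≤ 1 := by
          rw [← ev_zero]
          exact (hbasis _).mpr ⟨s, t, by rwa [ev_zero], by rwa [ev_zero], rfl⟩
        by_contra hne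
        have hlt : vL (algebraMap F L s + algebraMap F L t * β) < 1 := lt_of_le_of_ne hz1 hne
        have hle : vL (algebraMap F L s + algebraMap F L t * β) ≤ ev 1 := by
          have h2 := zm0_le_ev_of_lt_ev (k := 0) (by rwa [ev_zero])
          norm_num at h2
          exact h2
        have hw : vL ((algebraMap F L s + algebraMap F L t * β) / algebraMap F L ϖ) ≤ ev 0 := by
          rw [map_div₀, hvL, hϖ, ev_zero, div_eq_mul_inv]
          have h3 := mul_le_mul_left hle (ev 1)⁻¹
          rwa [mul_inv_cancel₀ (ev_ne_zero 1)] at h3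
        obtain ⟨s', t', hs', ht', hzw⟩ := (hbasis _).mp hw
        have hz2 : algebraMap F L s + algebraMap F L t * β
            = algebraMap F L (ϖ * s') + algebraMap F L (ϖ * t') * β := by
          have h4 : algebraMap F L s + algebraMap F L t * β
              = algebraMap F L ϖ * ((algebraMap F L s + algebraMap F L t * β) / algebraMap F L ϖ) := by
            field_simp
          rw [h4, hzw, _root_.map_mul, _root_.map_mul]
          ring
        obtain ⟨hs2, ht2⟩ := hcoords _ _ _ _ hz2
        have hslt : v s ≤ ev 1 := by
          rw [hs2, v.map_mul, hϖ]
          calc ev 1 * v s' ≤ ev 1 * 1 := mul_le_mul_right (by rw [← ev_zero]; exact hs') _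
            _ = ev 1 := mul_one _
        have htlt : v t ≤ ev 1 := by
          rw [ht2, v.map_mul, hϖ]
          calc ev 1 * v t' ≤ ev 1 * 1 := mul_le_mul_right (by rw [← ev_zero]; exact ht') _
            _ = ev 1 := mul_one _
        rcases hst with h1 | h1
        · rw [h1] at hslt; exact absurd hslt (not_le.mpr hev1lt)
        · rw [h1] at htlt; exact absurd htlt (not_le.mpr hev1lt)
      have hNunit : ∀ x y : F, v x ≤ 1 → v y ≤ 1 → (v x = 1 ∨ v y = 1) →
          v (x ^ 2 - b * x * y + a * c * y ^ 2) = 1 := by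
        intro x y hx hy hxy
        have e1 : algebraMap F L x - algebraMap F L c * algebraMap F L y * β
            = algebraMap F L x + algebraMap F L (-(c*y)) * β := by
          rw [map_neg, _root_.map_mul]; ring
        have e2 : algebraMap F L x - algebraMap F L b * algebraMap F L y +
              algebraMap F L c * algebraMap F L y * β
            = algebraMap F L (x - b*y) + algebraMap F L (c*y) * β := by
          rw [map_sub, _root_.map_mul, _root_.map_mul]
        have hvcy : v (-(c*y)) ≤ 1 := by
          rw [v.map_neg, v.map_mul, hc1, one_mul]; exact hy
        have h1 : vL (algebraMap F L x + algebraMap F L (-(c*y)) * β) = 1 := by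
          apply hunit x (-(c*y)) hx hvcy
          rcases hxy with h | h
          · exact Or.inl h
          · right; rw [v.map_neg, v.map_mul, hc1, one_mul]; exact h
        have h2 : vL (algebraMap F L (x - b*y) + algebraMap F L (c*y) * β) = 1 := by
          apply hunit (x - b*y) (c*y) (le_trans (v.map_sub _ _) (max_le hx
            (by rw [v.map_mul]; calc v b * v y ≤ 1 * 1 := mul_le_mul' hbo1 hy
                  _ = 1 := one_mul _)))
            (by rw [v.map_mul, hc1, one_mul]; exact hy)
          by_cases hy1 : v y = 1
          · right; rw [v.map_mul, hc1, one_mul]; exact hy1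
          · left
            have hxv : v x = 1 := by
              rcases hxy with h | h
              · exact h
              · exact absurd h hy1
            have hby : v (b * y) < v x := by
              rw [hxv, v.map_mul]
              calc v b * v y ≤ 1 * v y := mul_le_mul_left hbo1 _
                _ = v y := one_mul _
                _ < 1 := lt_of_le_of_ne hy hy1
            rw [v.map_sub_eq_of_lt_left hby]
            exact hxv
        have h3 : v (x ^ 2 - b * x * y + a * c * y ^ 2) ^ e = 1 := by
          rw [← hve, ← hnormid x y, vL.map_mul, e1, e2, h1, h2]; exact one_mul 1
        rw [he1, pow_one] at h3
        exact h3
      have hva0 : va = 0 := by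
        have h0 := hNunit 0 1 (by rw [v.map_zero]; exact zero_le_one) (le_of_eq v.map_one)
          (Or.inr v.map_one)
        have h1 : v (a*c) = 1 := by
          have e0 : (0:F) ^ 2 - b * 0 * 1 + a * c * 1 ^ 2 = a * c := by ring
          rwa [e0] at h0
        rw [v.map_mul, hc1, mul_one, hva] at h1
        have := ev_inj (by rw [h1, ev_zero] : ev va = ev 0)
        omega
      constructor
      · intro y hy
        have h0 := hNunit 1 y (le_of_eq v.map_one) hy (Or.inl v.map_one)
        have e0 : (1:F) ^ 2 - b * 1 * y + a * c * y ^ 2 = 1 - b * y + a * c * y ^ 2 := by ring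
        rwa [e0] at h0
      · intro x hx
        have hvac : v (a * c) = ev va := by rw [v.map_mul, hc1, mul_one, hva]
        have hsm : v (x ^ 2 - b * x) < v (a * c) := by
          rw [hvac, hva0, ev_zero]
          apply lt_of_le_of_lt _ hev1lt
          apply le_trans (v.map_sub _ _)
          apply max_le
          · rw [pow_two, v.map_mul]
            calc v x * v x ≤ ev 1 * 1 := mul_le_mul' hx (le_trans hx (le_of_lt hev1lt))
              _ = ev 1 := mul_one _
          · rw [v.map_mul]
            calc v b * v x ≤ 1 * ev 1 := mul_le_mul' hbo1 hx
              _ = ev 1 := one_mul _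
        rw [v.map_add_eq_of_lt_right hsm, hvac]
    · -- ramified
      have he2 : e = 2 := by
        have h1 := hve ϖ
        rw [hϖ, hram, ev_pow] at h1
        have := ev_inj h1
        omega
      have hvL2 : ∀ x : F, vL (algebraMap F L x) = v x ^ 2 := by
        intro x; rw [hve x, he2]
      have hva' : v a = ev 1 := by rw [hva, hva1]
      have hβo : vL β ≤ ev 0 := by
        apply (hbasis β).mpr ⟨0, 1, by rw [v.map_zero]; exact zero_le', by rw [v.map_one, ev_zero],
          by rw [map_zero, _root_.map_one]; ring⟩
      have hβbo : vL (algebraMap F L b - algebraMap F L c * β) ≤ ev 0 := by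
        apply (hbasis _).mpr ⟨b, -c, hbo, by rw [v.map_neg]; exact le_of_eq hc,
          by rw [map_neg]; ring⟩
      have hprod : β * (algebraMap F L b - algebraMap F L c * β) = algebraMap F L a := by
        linear_combination -hββ
      have hprodv : vL β * vL (algebraMap F L b - algebraMap F L c * β) = ev 2 := by
        rw [← vL.map_mul, hprod, hvL2, hva', ev_pow]
        norm_num
      have hβne : vL β ≠ 0 := by
        intro h; rw [h, zero_mul] at hprodv; exact (ev_ne_zero 2) hprodv.symm
      have hβbne : vL (algebraMap F L b - algebraMap F L c * β) ≠ 0 := by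
        intro h; rw [h, mul_zero] at hprodv; exact (ev_ne_zero 2) hprodv.symm
      have hdiv : ∀ w : L, vL w ≤ ev 2 → ∃ s t : F, v s ≤ ev 0 ∧ v t ≤ ev 0 ∧
          w = algebraMap F L (ϖ * s) + algebraMap F L (ϖ * t) * β := by
        intro w hw
        have hAϖ : algebraMap F L ϖ ≠ 0 := hϖLne
        have h1 : vL (w / algebraMap F L ϖ) ≤ ev 0 := by
          rw [map_div₀, hram, ev_zero, div_eq_mul_inv]
          have h3 := mul_le_mul_left hw (ev 2)⁻¹
          rwa [mul_inv_cancel₀ (ev_ne_zero 2)] at h3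
        obtain ⟨s, t, hs, ht, hwst⟩ := (hbasis _).mp h1
        refine ⟨s, t, hs, ht, ?_⟩
        have h4 : w = algebraMap F L ϖ * (w / algebraMap F L ϖ) := by field_simp
        rw [h4, hwst, _root_.map_mul, _root_.map_mul]
        ring
      obtain ⟨kβ, hkβ⟩ := zm0_exists_ev hβne
      obtain ⟨kβb, hkβb⟩ := zm0_exists_ev hβbne
      have hsum : kβ + kβb = 2 := by
        rw [hkβ, hkβb, ← ev_mul] at hprodv
        exact ev_inj hprodv
      have hkβ0 : 0 ≤ kβ := by
        rw [hkβ] at hβo; exact ev_le_ev.mp hβo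
      have hkβb0 : 0 ≤ kβb := by
        rw [hkβb] at hβbo; exact ev_le_ev.mp hβbo
      have hβnot2 : kβ ≠ 2 := by
        intro h2
        obtain ⟨s, t, hs, ht, hcoord⟩ := hdiv β (by rw [hkβ, h2])
        have hco := hcoords (ϖ*s) (ϖ*t) 0 1
          (by rw [← hcoord, map_zero, _root_.map_one]; ring)
        have h3 : v (ϖ * t) = 1 := by rw [hco.2, v.map_one]
        have h4 : v (ϖ * t) ≤ ev 1 := by
          rw [v.map_mul, hϖ]
          calc ev 1 * v t ≤ ev 1 * 1 := mul_le_mul_right (by rw [← ev_zero]; exact ht) _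
            _ = ev 1 := mul_one _
        rw [h3] at h4
        exact absurd h4 (not_le.mpr hev1lt)
      have hβbnot2 : kβb ≠ 2 := by
        intro h2
        obtain ⟨s, t, hs, ht, hcoord⟩ := hdiv _ (by rw [hkβb, h2])
        have hco := hcoords (ϖ*s) (ϖ*t) b (-c)
          (by rw [← hcoord, map_neg]; ring)
        have h3 : v (ϖ * t) = 1 := by rw [hco.2, v.map_neg, hc1]
        have h4 : v (ϖ * t) ≤ ev 1 := by
          rw [v.map_mul, hϖ]
          calc ev 1 * v t ≤ ev 1 * 1 := mul_le_mul_right (by rw [← ev_zero]; exact ht) _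
            _ = ev 1 := mul_one _
        rw [h3] at h4
        exact absurd h4 (not_le.mpr hev1lt)
      have hkβ1 : kβ = 1 := by omega
      have hkβb1 : kβb = 1 := by omega
      have hbL : vL (algebraMap F L b) ≤ ev 1 := by
        have e0 : algebraMap F L b = (algebraMap F L b - algebraMap F L c * β)
            + algebraMap F L c * β := by ring
        rw [e0]
        apply le_trans (vL.map_add _ _)
        apply max_le
        · rw [hkβb, hkβb1]
        · rw [vL.map_mul, hvL2, hc1, one_pow, one_mul, hkβ, hkβ1]
      have hb1 : v b ≤ ev 1 := by
        rcases eq_or_ne (v b) 0 with h0 | h0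
        · rw [h0]; exact zero_le'
        · obtain ⟨m, hm⟩ := zm0_exists_ev h0
          rw [hvL2, hm, ev_pow] at hbL
          have h5 := ev_le_ev.mp hbL
          rw [hm]
          exact ev_le_ev.mpr (by omega)
      constructor
      · intro y hy
        have h1 : v (a*c*y^2 - b*y) < 1 := by
          apply lt_of_le_of_lt _ hev1lt
          apply le_trans (v.map_sub _ _)
          apply max_le
          · rw [v.map_mul, v.map_mul, hva', hc1, mul_one, pow_two, v.map_mul]
            calc ev 1 * (v y * v y) ≤ ev 1 * (1 * 1) :=
                mul_le_mul_right (mul_le_mul' hy hy) _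
              _ = ev 1 := by rw [one_mul, mul_one]
          · rw [v.map_mul]
            calc v b * v y ≤ ev 1 * 1 := mul_le_mul' hb1 hy
              _ = ev 1 := mul_one _
        have e0 : 1 - b*y + a*c*y^2 = 1 + (a*c*y^2 - b*y) := by ring
        rw [e0, v.map_one_add_of_lt h1]
      · intro x hx
        have hvac : v (a * c) = ev va := by rw [v.map_mul, hc1, mul_one, hva]
        have hsm : v (x ^ 2 - b * x) < v (a * c) := by
          rw [hvac, hva1]
          apply lt_of_le_of_lt _ hev2lt
          apply le_trans (v.map_sub _ _)
          apply max_le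
          · rw [pow_two, v.map_mul]
            calc v x * v x ≤ ev 1 * ev 1 := mul_le_mul' hx hx
              _ = ev 2 := by rw [← ev_mul]; norm_num
          · rw [v.map_mul]
            calc v b * v x ≤ ev 1 * ev 1 := mul_le_mul' hb1 hx
              _ = ev 2 := by rw [← ev_mul]; norm_num
        rw [v.map_add_eq_of_lt_right hsm, hvac]
  obtain ⟨hU1, hU2⟩ := hUU
  have hva0 : (0:ℤ) ≤ va := by
    have h := hao
    rw [hva] at h
    exact ev_le_ev.mp h
  have hmem : ∀ x y : F, (tmat a b c x y ∈ ZF F * Kp v n C ↔ (x ≠ 0 ∧ v y ≤ ev C * v x)) := by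
    intro x y
    constructor
    · intro hm
      rw [Set.mem_mul] at hm
      obtain ⟨zm, hzm, k, hk, hzk⟩ := hm
      obtain ⟨z, hz0, rfl⟩ := hzm
      obtain ⟨hk00, hk01, hk10, hk11⟩ := hk
      have h00 : x = z * k 0 0 := by rw [← tmat00 a b c x y, ← hzk, smul_one_mul_entry]
      have h01 : c * y = z * k 0 1 := by rw [← tmat01 a b c x y, ← hzk, smul_one_mul_entry]
      have hvk00 : v (k 0 0) = 1 := by
        have hlt : v (1 - k 0 0) < 1 := by
          rw [show (1:F) - k 0 0 = -(k 0 0 - 1) by ring, v.map_neg]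
          exact lt_of_le_of_lt (le_trans hk00 (ev_le_ev.mpr (by omega))) hev1lt
        have he : k 0 0 = 1 - (1 - k 0 0) := by ring
        rw [he, v.map_one_sub_of_lt hlt]
      have hvx : v x = v z := by rw [h00, v.map_mul, hvk00, mul_one]
      have hvz : v z ≠ 0 := v.ne_zero_iff.mpr hz0
      have hxne : x ≠ 0 := v.ne_zero_iff.mp (by rw [hvx]; exact hvz)
      refine ⟨hxne, ?_⟩
      have h2 : v (c * y) ≤ v z * ev C := by
        rw [h01, v.map_mul]; exact mul_le_mul_right hk01 _
      rw [v.map_mul, hc1, one_mul] at h2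
      rw [hvx]
      calc v y ≤ v z * ev C := h2
        _ = ev C * v z := mul_comm _ _
    · rintro ⟨hx, hyx⟩
      have hvx : v x ≠ 0 := v.ne_zero_iff.mpr hx
      have hw : v (y / x) ≤ ev C := by
        rw [map_div₀, div_eq_mul_inv]
        calc v y * (v x)⁻¹ ≤ (ev C * v x) * (v x)⁻¹ := mul_le_mul_left hyx _
          _ = ev C := by rw [mul_assoc, mul_inv_cancel₀ hvx, mul_one]
      have hk : tmat a b c 1 (y/x) ∈ Kp v n C := by
        refine ⟨?_, ?_, ?_, ?_⟩
        · rw [tmat00, sub_self, v.map_zero]; exact zero_le'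
        · rw [tmat01, v.map_mul, hc1, one_mul]; exact hw
        · rw [tmat10, v.map_neg, v.map_mul]
          calc v a * v (y/x) ≤ 1 * ev C := mul_le_mul' hao1 hw
            _ = ev C := one_mul _
            _ ≤ ev ((n:ℤ) - C) := ev_le_ev.mpr (by omega)
        · rw [tmat11, ev_zero]
          apply v.map_one_sub_of_lt
          rw [v.map_mul]
          apply lt_of_le_of_lt _ hevClt
          calc v b * v (y/x) ≤ 1 * ev C := mul_le_mul' hbo1 hw
            _ = ev C := one_mul _
      have hZ : (x • (1 : Matrix (Fin 2) (Fin 2) F)) ∈ ZF F := ⟨x, hx, rfl⟩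
      have heq : (x • (1 : Matrix (Fin 2) (Fin 2) F)) * tmat a b c 1 (y/x) = tmat a b c x y := by
        have hxy : x * (y/x) = y := by field_simp
        rw [smul_mul_assoc, one_mul, smul_tmat, mul_one, hxy]
      rw [← heq]
      exact Set.mul_mem_mul hZ hk
  have hcoset : ∀ p r : F, (p^2 - b*p*r + a*c*r^2 ≠ 0) →
      ((∃ u ∈ TSet a b c ∩ (ZF F * Kp v n C), tmat a b c x₀ y₀ = tmat a b c p r * u) ↔
       ((p - b*r)*x₀ + a*c*r*y₀ ≠ 0 ∧
         v (p*y₀ - r*x₀) ≤ ev C * v ((p - b*r)*x₀ + a*c*r*y₀))) := by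
    intro p r hNm
    constructor
    · rintro ⟨u, ⟨⟨xu, yu, hNu, rfl⟩, hZK⟩, heq⟩
      rw [tmat_mul] at heq
      have h00 : x₀ = p*xu - a*c*r*yu := by
        have h := congrArg (fun m : Matrix (Fin 2) (Fin 2) F => m 0 0) heq
        simpa only [tmat00] using h
      have h01 : y₀ = p*yu + xu*r - b*r*yu := by
        have h := congrArg (fun m : Matrix (Fin 2) (Fin 2) F => m 0 1) heq
        simp only [tmat01] at h
        exact mul_left_cancel₀ hcne h
      obtain ⟨hxu, hyuv⟩ := (hmem xu yu).mp hZK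
      have hX : (p - b*r)*x₀ + a*c*r*y₀ = (p^2 - b*p*r + a*c*r^2) * xu := by
        rw [h00, h01]; ring
      have hY : p*y₀ - r*x₀ = (p^2 - b*p*r + a*c*r^2) * yu := by
        rw [h00, h01]; ring
      refine ⟨by rw [hX]; exact mul_ne_zero hNm hxu, ?_⟩
      rw [hX, hY, v.map_mul, v.map_mul]
      calc v (p^2 - b*p*r + a*c*r^2) * v yu
          ≤ v (p^2 - b*p*r + a*c*r^2) * (ev C * v xu) := mul_le_mul_right hyuv _
        _ = ev C * (v (p^2 - b*p*r + a*c*r^2) * v xu) := by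
            rw [← mul_assoc, mul_comm (v (p^2 - b*p*r + a*c*r^2)) (ev (C:ℤ)), mul_assoc]
    · rintro ⟨hX, hY⟩
      refine ⟨tmat a b c (((p - b*r)*x₀ + a*c*r*y₀)/(p^2 - b*p*r + a*c*r^2))
        ((p*y₀ - r*x₀)/(p^2 - b*p*r + a*c*r^2)), ⟨⟨_, _, ?_, rfl⟩, ?_⟩, ?_⟩
      · have hid : (((p - b*r)*x₀ + a*c*r*y₀)/(p^2 - b*p*r + a*c*r^2))^2
            - b*((((p - b*r)*x₀ + a*c*r*y₀))/(p^2 - b*p*r + a*c*r^2))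
              *((p*y₀ - r*x₀)/(p^2 - b*p*r + a*c*r^2))
            + a*c*((p*y₀ - r*x₀)/(p^2 - b*p*r + a*c*r^2))^2
            = (x₀^2 - b*x₀*y₀ + a*c*y₀^2)/(p^2 - b*p*r + a*c*r^2) := by
          simp only [div_eq_mul_inv]
          linear_combination (x₀^2 - b*x₀*y₀ + a*c*y₀^2) * (p^2 - b*p*r + a*c*r^2)⁻¹ * (mul_inv_cancel₀ hNm)
        rw [hid]
        exact div_ne_zero hN₀ hNm
      · apply (hmem _ _).mpr
        refine ⟨div_ne_zero hX hNm, ?_⟩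
        rw [map_div₀, map_div₀, div_eq_mul_inv, div_eq_mul_inv]
        calc v (p*y₀ - r*x₀) * (v (p^2 - b*p*r + a*c*r^2))⁻¹
            ≤ (ev C * v ((p - b*r)*x₀ + a*c*r*y₀)) * (v (p^2 - b*p*r + a*c*r^2))⁻¹ :=
              mul_le_mul_left hY _
          _ = ev C * (v ((p - b*r)*x₀ + a*c*r*y₀) * (v (p^2 - b*p*r + a*c*r^2))⁻¹) :=
              mul_assoc _ _ _
      · rw [tmat_mul]
        have e1 : p * (((p - b*r)*x₀ + a*c*r*y₀)/(p^2 - b*p*r + a*c*r^2))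
            - a*c*r*((p*y₀ - r*x₀)/(p^2 - b*p*r + a*c*r^2)) = x₀ := by
          rw [div_eq_mul_inv, div_eq_mul_inv]
          linear_combination (x₀) * (mul_inv_cancel₀ hNm)
        have e2 : p*((p*y₀ - r*x₀)/(p^2 - b*p*r + a*c*r^2))
            + (((p - b*r)*x₀ + a*c*r*y₀)/(p^2 - b*p*r + a*c*r^2))*r
            - b*r*((p*y₀ - r*x₀)/(p^2 - b*p*r + a*c*r^2)) = y₀ := by
          rw [div_eq_mul_inv, div_eq_mul_inv]
          linear_combination (y₀) * (mul_inv_cancel₀ hNm)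
        rw [e1, e2]
  have hN1 : ∀ y : F, v y ≤ 1 → (1:F)^2 - b*1*y + a*c*y^2 ≠ 0 := by
    intro y hy h0
    have h1 : (1:F) - b*y + a*c*y^2 = 0 := by linear_combination h0
    have h2 := hU1 y hy
    rw [h1, v.map_zero] at h2
    exact zero_ne_one h2
  have hN2 : ∀ x : F, v x ≤ ev 1 → x^2 - b*x*1 + a*c*1^2 ≠ 0 := by
    intro x hx h0
    have h1 : x^2 - b*x + a*c = 0 := by linear_combination h0
    have h2 := hU2 x hx
    rw [h1, v.map_zero] at h2
    exact (ev_ne_zero va) h2.symm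
  have hvac : v (a * c) = ev va := by rw [v.map_mul, hc1, mul_one, hva]
  by_cases hwhich : v y₀ ≤ v x₀
  · -- Case I : t(1,y)
    have hx₀ : x₀ ≠ 0 := by
      intro h0
      rw [h0, v.map_zero, le_zero_iff] at hwhich
      have hy0 : y₀ = 0 := v.zero_iff.mp hwhich
      rw [h0, hy0] at hN₀
      simp at hN₀
    have hvx₀ : v x₀ ≠ 0 := v.ne_zero_iff.mpr hx₀
    have hη : v (y₀ / x₀) ≤ ev 0 := by
      rw [ev_zero, map_div₀, div_eq_mul_inv]
      calc v y₀ * (v x₀)⁻¹ ≤ v x₀ * (v x₀)⁻¹ := mul_le_mul_left hwhich _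
        _ = 1 := mul_inv_cancel₀ hvx₀
    obtain ⟨y, ⟨hyR, hyC⟩, hyuniq⟩ := hRrep (y₀/x₀) hη
    have hyo : v y ≤ 1 := by rw [← ev_zero]; exact hR y hyR
    refine ⟨tmat a b c 1 y, ⟨Or.inl ⟨y, hyR, rfl⟩, ?_⟩, ?_⟩
    · apply (hcoset 1 y (hN1 y hyo)).mpr
      have hfac : v (1 - b*y + a*c*y*(y₀/x₀)) = 1 := by
        have hsplit : 1 - b*y + a*c*y*(y₀/x₀)
            = (1 - b*y + a*c*y^2) + a*c*y*(y₀/x₀ - y) := by ring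
        have hsmall : v (a*c*y*(y₀/x₀ - y)) < v (1 - b*y + a*c*y^2) := by
          rw [hU1 y hyo]
          apply lt_of_le_of_lt _ hevClt
          rw [v.map_mul, v.map_mul, v.map_mul]
          have hbd : v a * v c * v y * v (y₀/x₀ - y) ≤ 1 * 1 * 1 * ev C :=
            mul_le_mul' (mul_le_mul' (mul_le_mul' hao1 (le_of_eq hc1)) hyo) hyC
          simpa using hbd
        rw [hsplit, v.map_add_eq_of_lt_left hsmall, hU1 y hyo]
      have hXeq : (1 - b*y)*x₀ + a*c*y*y₀ = x₀ * (1 - b*y + a*c*y*(y₀/x₀)) := by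
        field_simp
        try ring
      have hvX : v ((1 - b*y)*x₀ + a*c*y*y₀) = v x₀ := by
        rw [hXeq, v.map_mul, hfac, mul_one]
      refine ⟨v.ne_zero_iff.mp (by rw [hvX]; exact hvx₀), ?_⟩
      have hYeq : 1*y₀ - y*x₀ = x₀ * (y₀/x₀ - y) := by
        field_simp
        try ring
      rw [hYeq, v.map_mul, hvX]
      calc v x₀ * v (y₀/x₀ - y) ≤ v x₀ * ev C := mul_le_mul_right hyC _
        _ = ev C * v x₀ := mul_comm _ _
    · rintro m' ⟨hfam', hex'⟩
      rcases hfam' with ⟨y'', hy''R, rfl⟩ | ⟨x'', hx''R, rfl⟩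
      · have hy''o : v y'' ≤ 1 := by rw [← ev_zero]; exact hR y'' hy''R
        obtain ⟨hX'', hY''⟩ := (hcoset 1 y'' (hN1 y'' hy''o)).mp hex'
        have hXle : v ((1 - b*y'')*x₀ + a*c*y''*y₀) ≤ v x₀ := by
          have hXeq : (1 - b*y'')*x₀ + a*c*y''*y₀ = x₀ * (1 - b*y'' + a*c*y''*(y₀/x₀)) := by
            field_simp
            try ring
          rw [hXeq, v.map_mul]
          have hfle : v (1 - b*y'' + a*c*y''*(y₀/x₀)) ≤ 1 := by
            apply le_trans (v.map_add _ _)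
            apply max_le
            · apply le_trans (v.map_sub _ _)
              apply max_le (le_of_eq v.map_one)
              rw [v.map_mul]
              calc v b * v y'' ≤ 1 * 1 := mul_le_mul' hbo1 hy''o
                _ = 1 := one_mul _
            · rw [v.map_mul, v.map_mul, v.map_mul]
              have hη1 : v (y₀/x₀) ≤ 1 := by rw [← ev_zero]; exact hη
              have hbd : v a * v c * v y'' * v (y₀/x₀) ≤ 1 * 1 * 1 * 1 :=
                mul_le_mul' (mul_le_mul' (mul_le_mul' hao1 (le_of_eq hc1)) hy''o) hη1
              simpa using hbd
          calc v x₀ * v (1 - b*y'' + a*c*y''*(y₀/x₀)) ≤ v x₀ * 1 := mul_le_mul_right hfle _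
            _ = v x₀ := mul_one _
        have hfin : v (y₀/x₀ - y'') ≤ ev C := by
          apply zm0_le_of_mul_le_mul hvx₀
          have hYeq : v (1*y₀ - y''*x₀) = v x₀ * v (y₀/x₀ - y'') := by
            have hsh : 1*y₀ - y''*x₀ = x₀*(y₀/x₀ - y'') := by field_simp; try ring
            rw [hsh, v.map_mul]
          calc v x₀ * v (y₀/x₀ - y'') = v (1*y₀ - y''*x₀) := hYeq.symm
            _ ≤ ev C * v ((1 - b*y'')*x₀ + a*c*y''*y₀) := hY''
            _ ≤ ev C * v x₀ := mul_le_mul_right hXle _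
            _ = v x₀ * ev C := mul_comm _ _
        rw [hyuniq y'' ⟨hy''R, hfin⟩]
      · exfalso
        have hx''p : v x'' ≤ ev 1 := hR' x'' hx''R
        have hx''1 : v x'' ≤ 1 := le_of_lt (lt_of_le_of_lt hx''p hev1lt)
        obtain ⟨hX'', hY''⟩ := (hcoset x'' 1 (hN2 x'' hx''p)).mp hex'
        have hYv : v (x''*y₀ - 1*x₀) = v x₀ := by
          have hsh : x''*y₀ - 1*x₀ = x₀ * (x''*(y₀/x₀) - 1) := by field_simp; try ring
          rw [hsh, v.map_mul]
          have h2 : v (x''*(y₀/x₀) - 1) = 1 := by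
            rw [show x''*(y₀/x₀) - 1 = -(1 - x''*(y₀/x₀)) by ring, v.map_neg]
            apply v.map_one_sub_of_lt
            rw [v.map_mul]
            apply lt_of_le_of_lt _ hev1lt
            have hη1 : v (y₀/x₀) ≤ 1 := by rw [← ev_zero]; exact hη
            have hbd : v x'' * v (y₀/x₀) ≤ ev 1 * 1 := mul_le_mul' hx''p hη1
            simpa using hbd
          rw [h2, mul_one]
        have hXle : v ((x'' - b*1)*x₀ + a*c*1*y₀) ≤ v x₀ := by
          have hsh2 : (x'' - b*1)*x₀ + a*c*1*y₀ = x₀ * ((x'' - b) + a*c*(y₀/x₀)) := by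
            field_simp; try ring
          rw [hsh2, v.map_mul]
          have hfle : v ((x'' - b) + a*c*(y₀/x₀)) ≤ 1 := by
            apply le_trans (v.map_add _ _)
            apply max_le
            · exact le_trans (v.map_sub _ _) (max_le hx''1 hbo1)
            · rw [v.map_mul, v.map_mul]
              have hη1 : v (y₀/x₀) ≤ 1 := by rw [← ev_zero]; exact hη
              have hbd : v a * v c * v (y₀/x₀) ≤ 1 * 1 * 1 :=
                mul_le_mul' (mul_le_mul' hao1 (le_of_eq hc1)) hη1
              simpa using hbd
          calc v x₀ * v ((x'' - b) + a*c*(y₀/x₀)) ≤ v x₀ * 1 := mul_le_mul_right hfle _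
            _ = v x₀ := mul_one _
        have hcontr : v x₀ ≤ ev C * v x₀ := by
          calc v x₀ = v (x''*y₀ - 1*x₀) := hYv.symm
            _ ≤ ev C * v ((x'' - b*1)*x₀ + a*c*1*y₀) := hY''
            _ ≤ ev C * v x₀ := mul_le_mul_right hXle _
        exact absurd hcontr (not_le.mpr (zm0_mul_lt_of_lt_one hevClt hvx₀))
  · -- Case II : t(x,1)
    have hlt : v x₀ < v y₀ := not_le.mp hwhich
    have hvy₀ : v y₀ ≠ 0 := by
      intro h0; rw [h0] at hlt; exact absurd hlt (by simp)
    have hy₀ : y₀ ≠ 0 := v.ne_zero_iff.mp hvy₀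
    have hξ : v (x₀/y₀) ≤ ev 1 := by
      have h1 : v (x₀/y₀) < 1 := by
        rw [map_div₀, div_eq_mul_inv]
        exact zm0_mul_inv_lt_one hlt hvy₀
      have h2 := zm0_le_ev_of_lt_ev (k := 0) (by rwa [ev_zero])
      rwa [show (0:ℤ)+1 = 1 by norm_num] at h2
    obtain ⟨x, ⟨hxR, hxC⟩, hxuniq⟩ := hR'rep (x₀/y₀) hξ
    have hxp : v x ≤ ev 1 := hR' x hxR
    have hx1 : v x ≤ 1 := le_of_lt (lt_of_le_of_lt hxp hev1lt)
    refine ⟨tmat a b c x 1, ⟨Or.inr ⟨x, hxR, rfl⟩, ?_⟩, ?_⟩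
    · apply (hcoset x 1 (hN2 x hxp)).mpr
      have hfac : v ((x - b)*(x₀/y₀) + a*c) = ev va := by
        have hsplit : (x - b)*(x₀/y₀) + a*c
            = (x^2 - b*x + a*c) + (x - b)*((x₀/y₀) - x) := by ring
        have hsmall : v ((x - b)*((x₀/y₀) - x)) < v (x^2 - b*x + a*c) := by
          rw [hU2 x hxp, v.map_mul]
          have hbd : v (x - b) * v (x₀/y₀ - x) ≤ 1 * ev ((C:ℤ) + va) :=
            mul_le_mul' (le_trans (v.map_sub _ _) (max_le hx1 hbo1)) hxC
          rw [one_mul] at hbd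
          exact lt_of_le_of_lt hbd (ev_lt_ev.mpr (by omega))
        rw [hsplit, v.map_add_eq_of_lt_left hsmall, hU2 x hxp]
      have hXeq : (x - b*1)*x₀ + a*c*1*y₀ = y₀ * ((x - b)*(x₀/y₀) + a*c) := by
        field_simp
        try ring
      have hvX : v ((x - b*1)*x₀ + a*c*1*y₀) = v y₀ * ev va := by
        rw [hXeq, v.map_mul, hfac]
      refine ⟨v.ne_zero_iff.mp (by rw [hvX]; exact mul_ne_zero hvy₀ (ev_ne_zero va)), ?_⟩
      have hYeq : x*y₀ - 1*x₀ = y₀ * (x - x₀/y₀) := by field_simp; try ring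
      rw [hYeq, v.map_mul, hvX]
      have hvsym : v (x - x₀/y₀) = v (x₀/y₀ - x) := by rw [← v.map_neg, neg_sub]
      rw [hvsym]
      calc v y₀ * v (x₀/y₀ - x) ≤ v y₀ * ev ((C:ℤ) + va) := mul_le_mul_right hxC _
        _ = ev C * (v y₀ * ev va) := by
            rw [ev_mul, ← mul_assoc, mul_comm (v y₀) (ev (C:ℤ)), mul_assoc]
    · rintro m' ⟨hfam', hex'⟩
      rcases hfam' with ⟨y'', hy''R, rfl⟩ | ⟨x'', hx''R, rfl⟩
      · exfalso
        have hy''o : v y'' ≤ 1 := by rw [← ev_zero]; exact hR y'' hy''R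
        obtain ⟨hX'', hY''⟩ := (hcoset 1 y'' (hN1 y'' hy''o)).mp hex'
        have hξ1 : v (x₀/y₀) ≤ 1 := le_of_lt (lt_of_le_of_lt hξ hev1lt)
        have hYv : v (1*y₀ - y''*x₀) = v y₀ := by
          have hsh : 1*y₀ - y''*x₀ = y₀ * (1 - y''*(x₀/y₀)) := by field_simp; try ring
          rw [hsh, v.map_mul]
          have h2 : v (1 - y''*(x₀/y₀)) = 1 := by
            apply v.map_one_sub_of_lt
            rw [v.map_mul]
            apply lt_of_le_of_lt _ hev1lt
            calc v y'' * v (x₀/y₀) ≤ 1 * ev 1 := mul_le_mul' hy''o hξ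
              _ = ev 1 := one_mul _
          rw [h2, mul_one]
        have hXle : v ((1 - b*y'')*x₀ + a*c*y''*y₀) ≤ v y₀ := by
          have hsh2 : (1 - b*y'')*x₀ + a*c*y''*y₀ = y₀ * ((1 - b*y'')*(x₀/y₀) + a*c*y'') := by
            field_simp; try ring
          rw [hsh2, v.map_mul]
          have hfle : v ((1 - b*y'')*(x₀/y₀) + a*c*y'') ≤ 1 := by
            apply le_trans (v.map_add _ _)
            apply max_le
            · rw [v.map_mul]
              have h3 : v (1 - b*y'') ≤ 1 := by
                apply le_trans (v.map_sub _ _)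
                apply max_le (le_of_eq v.map_one)
                rw [v.map_mul]
                calc v b * v y'' ≤ 1 * 1 := mul_le_mul' hbo1 hy''o
                  _ = 1 := one_mul _
              calc v (1 - b*y'') * v (x₀/y₀) ≤ 1 * 1 := mul_le_mul' h3 hξ1
                _ = 1 := one_mul _
            · rw [v.map_mul, v.map_mul]
              calc v a * v c * v y'' ≤ 1 * 1 * 1 :=
                  mul_le_mul' (mul_le_mul' hao1 (le_of_eq hc1)) hy''o
                _ = 1 := by norm_num
          calc v y₀ * v ((1 - b*y'')*(x₀/y₀) + a*c*y'') ≤ v y₀ * 1 := mul_le_mul_right hfle _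
            _ = v y₀ := mul_one _
        have hcontr : v y₀ ≤ ev C * v y₀ := by
          calc v y₀ = v (1*y₀ - y''*x₀) := hYv.symm
            _ ≤ ev C * v ((1 - b*y'')*x₀ + a*c*y''*y₀) := hY''
            _ ≤ ev C * v y₀ := mul_le_mul_right hXle _
        exact absurd hcontr (not_le.mpr (zm0_mul_lt_of_lt_one hevClt hvy₀))
      · have hx''p : v x'' ≤ ev 1 := hR' x'' hx''R
        have hx''1 : v x'' ≤ 1 := le_of_lt (lt_of_le_of_lt hx''p hev1lt)
        obtain ⟨hX'', hY''⟩ := (hcoset x'' 1 (hN2 x'' hx''p)).mp hex'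
        have hYv : v (x''*y₀ - 1*x₀) = v y₀ * v (x₀/y₀ - x'') := by
          have hsh : x''*y₀ - 1*x₀ = y₀*(x'' - x₀/y₀) := by field_simp; try ring
          rw [hsh, v.map_mul]
          rw [show v (x'' - x₀/y₀) = v (x₀/y₀ - x'') by rw [← v.map_neg, neg_sub]]
        have hXle : v ((x'' - b*1)*x₀ + a*c*1*y₀)
            ≤ v y₀ * max (ev va) (v (x₀/y₀ - x'')) := by
          have hsh2 : (x'' - b*1)*x₀ + a*c*1*y₀
              = y₀ * ((x''^2 - b*x'' + a*c) + (x'' - b)*(x₀/y₀ - x'')) := by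
            field_simp; try ring
          rw [hsh2, v.map_mul]
          apply mul_le_mul_right
          apply le_trans (v.map_add _ _)
          apply max_le
          · rw [hU2 x'' hx''p]; exact le_max_left _ _
          · apply le_trans _ (le_max_right (ev va) _)
            rw [v.map_mul]
            calc v (x'' - b) * v (x₀/y₀ - x'') ≤ 1 * v (x₀/y₀ - x'') :=
                mul_le_mul_left (le_trans (v.map_sub _ _) (max_le hx''1 hbo1)) _
              _ = v (x₀/y₀ - x'') := one_mul _
        have hkey : v (x₀/y₀ - x'') ≤ ev ((C:ℤ) + va) := by
          rcases eq_or_ne (v (x₀/y₀ - x'')) 0 with h0 | h0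
          · rw [h0]; exact zero_le'
          · have h2 : v (x₀/y₀ - x'') ≤ ev C * max (ev va) (v (x₀/y₀ - x'')) := by
              apply zm0_le_of_mul_le_mul hvy₀
              calc v y₀ * v (x₀/y₀ - x'') = v (x''*y₀ - 1*x₀) := hYv.symm
                _ ≤ ev C * v ((x'' - b*1)*x₀ + a*c*1*y₀) := hY''
                _ ≤ ev C * (v y₀ * max (ev va) (v (x₀/y₀ - x''))) := mul_le_mul_right hXle _
                _ = v y₀ * (ev C * max (ev va) (v (x₀/y₀ - x''))) := by
                    rw [← mul_assoc, mul_comm (ev (C:ℤ)) (v y₀), mul_assoc]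
            rcases max_cases (ev va) (v (x₀/y₀ - x'')) with ⟨hm, _⟩ | ⟨hm, _⟩
            · rw [hm, ← ev_mul] at h2; exact h2
            · rw [hm] at h2
              exact absurd h2 (not_le.mpr (zm0_mul_lt_of_lt_one hevClt h0))
        rw [hxuniq x'' ⟨hx''R, hkey⟩]
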